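/- Let A and B be symmetric positive definite n×n real matrices. Then there is a unique symmetric positive definite matrix L satisfying L²AL² = B, and it is given by the explicit formula L = (A^{−1/2}(A^{1/2}BA^{1/2})^{1/2}A^{−1/2})^{1/2}. -/

import Mathlib

open Matrix in
private lemma myConj {m : Type*} [Fintype m] [DecidableEq m]
    {M B : Matrix m m ℝ} (hM : M.PosDef) (hB : IsUnit B) :
    (Bᴴ * M * B).PosDef := by
  refine PosDef.of_dotProduct_mulVec_pos (isHermitian_conjTranspose_mul_mul B hM.1) fun x hx => ?_
  have hx' : B *ᵥ x ≠ 0 := fun h0 =>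
    hx ((mulVec_injective_iff_isUnit.mpr hB).eq_iff.mp (by simp [h0]))
  simpa only [star_mulVec, dotProduct_mulVec, vecMul_vecMul] using hM.dotProduct_mulVec_pos hx'

open Matrix in
private lemma myConj' {m : Type*} [Fintype m] [DecidableEq m]
    {M B : Matrix m m ℝ} (hM : M.PosDef) (hB : IsUnit B) :
    (B * M * Bᴴ).PosDef := by
  have hB' : IsUnit Bᴴ := by
    rw [isUnit_iff_isUnit_det, det_conjTranspose, isUnit_star]
    exact (isUnit_iff_isUnit_det B).mp hB
  simpa only [conjTranspose_conjTranspose] using myConj hM hB'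

open scoped MatrixOrder in
noncomputable def Matrix.PosSemidef.sqrt {m : Type*} [Fintype m] [DecidableEq m]
    {S : Matrix m m ℝ} (_hS : S.PosSemidef) : Matrix m m ℝ := CFC.sqrt S

open scoped MatrixOrder in
lemma Matrix.PosSemidef.posSemidef_sqrt {m : Type*} [Fintype m] [DecidableEq m]
    {S : Matrix m m ℝ} (hS : S.PosSemidef) : hS.sqrt.PosSemidef :=
  Matrix.nonneg_iff_posSemidef.mp (CFC.sqrt_nonneg S)

open scoped MatrixOrder in
lemma Matrix.PosSemidef.sqrt_mul_self {m : Type*} [Fintype m] [DecidableEq m]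
    {S : Matrix m m ℝ} (hS : S.PosSemidef) : hS.sqrt * hS.sqrt = S := by
  rw [← sq]
  exact CFC.sq_sqrt S hS.nonneg

open scoped MatrixOrder in
lemma Matrix.PosSemidef.eq_of_sq_eq_sq {m : Type*} [Fintype m] [DecidableEq m]
    {A B : Matrix m m ℝ} (hA : A.PosSemidef) (hB : B.PosSemidef) (h : A ^ 2 = B ^ 2) :
    A = B := by
  rw [← CFC.sqrt_sq A hA.nonneg, h, CFC.sqrt_sq B hB.nonneg]

open Matrix in
private lemma posDefOfUnit {m : Type*} [Fintype m] [DecidableEq m]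
    {S : Matrix m m ℝ} (hS : S.PosSemidef) (h : IsUnit S) : S.PosDef := by
  have hR := hS.posSemidef_sqrt
  have hRR := hS.sqrt_mul_self
  have hRu : IsUnit hS.sqrt := by
    rw [isUnit_iff_isUnit_det]
    have hmul : hS.sqrt.det * hS.sqrt.det = S.det := by rw [← det_mul, hRR]
    have hd : S.det ≠ 0 := by
      intro h0
      exact (by simpa [h0] using (isUnit_iff_isUnit_det S).mp h : IsUnit (0:ℝ)).ne_zero rfl
    exact isUnit_iff_ne_zero.mpr (fun h0 => hd (by rw [← hmul, h0, zero_mul]))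
  refine PosDef.of_dotProduct_mulVec_pos hS.1 fun x hx => ?_
  have hx' : hS.sqrt *ᵥ x ≠ 0 := fun h0 =>
    hx ((mulVec_injective_iff_isUnit.mpr hRu).eq_iff.mp (by simp [h0]))
  have key : star x ⬝ᵥ S *ᵥ x = star (hS.sqrt *ᵥ x) ⬝ᵥ (hS.sqrt *ᵥ x) := by
    conv_lhs => rw [← hRR]
    rw [← mulVec_mulVec, dotProduct_mulVec, star_mulVec, hR.1.eq]
  rw [key]
  exact Matrix.dotProduct_star_self_pos_iff.mpr hx'

open Matrix in
private lemma sqrtPosDef {m : Type*} [Fintype m] [DecidableEq m]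
    {A : Matrix m m ℝ} (hA : A.PosDef) : hA.posSemidef.sqrt.PosDef := by
  apply posDefOfUnit hA.posSemidef.posSemidef_sqrt
  rw [isUnit_iff_isUnit_det]
  have hmul : hA.posSemidef.sqrt.det * hA.posSemidef.sqrt.det = A.det := by
    rw [← det_mul, hA.posSemidef.sqrt_mul_self]
  exact isUnit_iff_ne_zero.mpr fun h0 => hA.det_pos.ne' (by rw [← hmul, h0, zero_mul])

/-- `S` is the (unique) symmetric positive definite square root of `M`. -/
def IsPosDefSqrt {n : ℕ} (S M : Matrix (Fin n) (Fin n) ℝ) : Prop :=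
  S.PosDef ∧ S * S = M

/-- for symmetric positive definite `A, B` there is a unique symmetric
positive definite `L` with `L²AL² = B`, and it is given by the formula
`L = (A^{-1/2} (A^{1/2} B A^{1/2})^{1/2} A^{-1/2})^{1/2}` (expressed here through the
unique positive definite square roots `S = A^{1/2}`, `C = (A^{1/2}BA^{1/2})^{1/2}`,
`L = (S⁻¹ C S⁻¹)^{1/2}`). -/
theorem unique_posdef_L_solving_L2AL2_eq_B
    (n : ℕ) (A B : Matrix (Fin n) (Fin n) ℝ) (hA : A.PosDef) (hB : B.PosDef) :
    (∃! L : Matrix (Fin n) (Fin n) ℝ, L.PosDef ∧ L * L * A * (L * L) = B) ∧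
    (∀ S C L : Matrix (Fin n) (Fin n) ℝ,
      IsPosDefSqrt S A → IsPosDefSqrt C (S * B * S) → IsPosDefSqrt L (S⁻¹ * C * S⁻¹) →
      L.PosDef ∧ L * L * A * (L * L) = B) := by
  classical
  have key : ∀ S C L : Matrix (Fin n) (Fin n) ℝ,
      IsPosDefSqrt S A → IsPosDefSqrt C (S * B * S) → IsPosDefSqrt L (S⁻¹ * C * S⁻¹) →
      L.PosDef ∧ L * L * A * (L * L) = B := by
    rintro S C L ⟨hSp, hSS⟩ ⟨hCp, hCC⟩ ⟨hLp, hLL⟩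
    refine ⟨hLp, ?_⟩
    have hdS : IsUnit S.det := (Matrix.isUnit_iff_isUnit_det S).mp hSp.isUnit
    rw [hLL, ← hSS]
    simp only [Matrix.mul_assoc, Matrix.nonsing_inv_mul_cancel_left _ _ hdS,
      Matrix.mul_nonsing_inv_cancel_left _ _ hdS]
    rw [show C * (C * S⁻¹) = (C * C) * S⁻¹ from (Matrix.mul_assoc _ _ _).symm, hCC]
    simp only [Matrix.mul_assoc, Matrix.nonsing_inv_mul_cancel_left _ _ hdS,
      Matrix.mul_nonsing_inv_cancel_left _ _ hdS]
    rw [Matrix.mul_nonsing_inv _ hdS, Matrix.mul_one]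
  refine ⟨?_, key⟩
  -- construct the explicit square roots
  set S := hA.posSemidef.sqrt with hSdef
  have hSp : S.PosDef := sqrtPosDef hA
  have hS : IsPosDefSqrt S A := ⟨hSp, hA.posSemidef.sqrt_mul_self⟩
  have hSBS : (S * B * S).PosDef := by
    have h := myConj' hB hSp.isUnit
    rwa [hSp.1.eq] at h
  set C := hSBS.posSemidef.sqrt with hCdef
  have hCp : C.PosDef := sqrtPosDef hSBS
  have hC : IsPosDefSqrt C (S * B * S) := ⟨hCp, hSBS.posSemidef.sqrt_mul_self⟩
  have hSinv : S⁻¹.PosDef := hSp.inv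
  have hSCS : (S⁻¹ * C * S⁻¹).PosDef := by
    have h := myConj' hCp hSinv.isUnit
    rwa [hSinv.1.eq] at h
  set L := hSCS.posSemidef.sqrt with hLdef
  have hLp : L.PosDef := sqrtPosDef hSCS
  have hL : IsPosDefSqrt L (S⁻¹ * C * S⁻¹) := ⟨hLp, hSCS.posSemidef.sqrt_mul_self⟩
  refine ⟨L, key S C L hS hC hL, ?_⟩
  rintro y ⟨hyp, hy⟩
  have hdS : IsUnit S.det := (Matrix.isUnit_iff_isUnit_det S).mp hSp.isUnit
  -- y*y is positive definite
  have hyy : (y * y).PosDef := by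
    have h := myConj' Matrix.PosDef.one hyp.isUnit
    rwa [Matrix.mul_one, hyp.1.eq] at h
  -- S*(y*y)*S is positive definite and squares to S*B*S
  have hSyS : (S * (y * y) * S).PosDef := by
    have h := myConj' hyy hSp.isUnit
    rwa [hSp.1.eq] at h
  have hsq : (S * (y * y) * S) ^ 2 = C ^ 2 := by
    rw [pow_two, pow_two, hC.2, ← hy, ← hS.2]
    simp only [Matrix.mul_assoc]
  have hSyS_eq : S * (y * y) * S = C :=
    hSyS.posSemidef.eq_of_sq_eq_sq hCp.posSemidef hsq
  have hyyL : y * y = L * L := by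
    rw [hL.2, ← hSyS_eq]
    simp only [Matrix.mul_assoc, Matrix.nonsing_inv_mul_cancel_left _ _ hdS]
    rw [Matrix.mul_nonsing_inv _ hdS, Matrix.mul_one]
  exact hyp.posSemidef.eq_of_sq_eq_sq hLp.posSemidef (by rw [pow_two, pow_two, hyyL])
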